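/- Let V be a finite-dimensional real normed vector space with d = dim V, let ψ_1, …, ψ_d be linearly independent elements of V*, and set ψ = (1/d)(ψ_1 + ⋯ + ψ_d). Then there exist neighbourhoods U_1, …, U_d of ψ_1, …, ψ_d respectively in V* such that whenever φ_i ∈ U_i for i = 1, …, d, the set K' = {x ∈ V : φ_i(x) ≥ 0 for all i = 1, …, d} is a solid closed cone and ψ(x) > 0 for all x ∈ K' with x ≠ 0. -/

import Mathlib

set_option maxHeartbeats 1600000

/-- Lemma on perturbation: near linearly independent functionals
`ψ_1, …, ψ_d` one can choose functionals `φ_i` so that the cone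
`K' = {x : φ_i(x) ≥ 0 ∀ i}` is a solid closed cone for which
`ψ = (1/d)(ψ_1 + ⋯ + ψ_d)` is strictly positive. -/
theorem perturbed_cone_strictly_positive_functional
    {V : Type*} [NormedAddCommGroup V] [NormedSpace ℝ V] [FiniteDimensional ℝ V]
    (d : ℕ) (hd : d = Module.finrank ℝ V)
    (ψ : Fin d → (V →L[ℝ] ℝ)) (hψ : LinearIndependent ℝ ψ) :
    ∃ U : Fin d → Set (V →L[ℝ] ℝ),
      (∀ i, U i ∈ nhds (ψ i)) ∧
      ∀ φ : Fin d → (V →L[ℝ] ℝ), (∀ i, φ i ∈ U i) →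
        Convex ℝ {x : V | ∀ i, 0 ≤ φ i x} ∧
        (∀ (c : ℝ), 0 ≤ c → ∀ x ∈ {x : V | ∀ i, 0 ≤ φ i x}, c • x ∈ {x : V | ∀ i, 0 ≤ φ i x}) ∧
        {x : V | ∀ i, 0 ≤ φ i x} ∩ (-{x : V | ∀ i, 0 ≤ φ i x}) = {0} ∧
        IsClosed {x : V | ∀ i, 0 ≤ φ i x} ∧
        (interior {x : V | ∀ i, 0 ≤ φ i x}).Nonempty ∧
        ∀ x : V, (∀ i, 0 ≤ φ i x) → x ≠ 0 →
          0 < ((d : ℝ)⁻¹ • ∑ i, ψ i) x := by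
  classical
  by_cases hd0 : d = 0
  · -- degenerate case : `V` is trivial
    subst hd0
    have hsub : Subsingleton V := Module.finrank_zero_iff.mp hd.symm
    have hzero : ∀ x : V, x = 0 := fun x => Subsingleton.elim x 0
    refine ⟨fun _ => Set.univ, fun _ => Filter.univ_mem, fun φ _ => ?_⟩
    have hU : {x : V | ∀ i, 0 ≤ φ i x} = Set.univ :=
      Set.eq_univ_of_forall fun x i => i.elim0
    refine ⟨?_, ?_, ?_, ?_, ?_, ?_⟩
    · intro x _ y _ a b _ _ _ i; exact i.elim0
    · intro c _ x _ i; exact i.elim0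
    · rw [hU]
      ext x
      simp [hzero x]
    · rw [hU]; exact isClosed_univ
    · rw [hU, interior_univ]; exact ⟨0, trivial⟩
    · intro x _ hx; exact absurd (hzero x) hx
  have hdpos : 0 < d := Nat.pos_of_ne_zero hd0
  have hd1 : (1 : ℝ) ≤ (d : ℝ) := by exact_mod_cast hdpos
  have hdR : (0 : ℝ) < (d : ℝ) := by positivity
  -- the ψ's form a basis of the dual space
  have hψ' : LinearIndependent ℝ (fun i => (ψ i : V →ₗ[ℝ] ℝ)) :=
    hψ.map' (ContinuousLinearMap.coeLM ℝ)
      (LinearMap.ker_eq_bot.mpr ContinuousLinearMap.coe_injective)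
  haveI : Nonempty (Fin d) := ⟨⟨0, hdpos⟩⟩
  have hcard : Fintype.card (Fin d) = Module.finrank ℝ (Module.Dual ℝ V) := by
    rw [Fintype.card_fin, Subspace.dual_finrank_eq]; exact hd
  -- the coordinate map
  set T : V →ₗ[ℝ] (Fin d → ℝ) := LinearMap.pi (fun i => (ψ i : V →ₗ[ℝ] ℝ)) with hTdef
  have hT_inj : Function.Injective T := by
    rw [← LinearMap.ker_eq_bot, LinearMap.ker_eq_bot']
    intro x hx
    have hx' : ∀ i, ψ i x = 0 := fun i => congrFun hx i
    have hall : ∀ f : Module.Dual ℝ V, f x = 0 := by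
      intro f
      set B : Module.Basis (Fin d) ℝ (Module.Dual ℝ V) :=
        basisOfLinearIndependentOfCardEqFinrank hψ' hcard with hBdef
      have hB : ∀ i, B i = (ψ i : V →ₗ[ℝ] ℝ) := fun i =>
        congrFun (coe_basisOfLinearIndependentOfCardEqFinrank hψ' hcard) i
      have hf := B.sum_repr f
      calc f x = (∑ i, B.repr f i • B i) x := by rw [hf]
        _ = ∑ i, B.repr f i * (ψ i x) := by
              rw [LinearMap.sum_apply]
              refine Finset.sum_congr rfl fun i _ => ?_
              rw [LinearMap.smul_apply, hB i, smul_eq_mul]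
              rfl
        _ = 0 := by simp [hx']
    exact (Module.forall_dual_apply_eq_zero_iff ℝ x).mp hall
  have hrank : Module.finrank ℝ V = Module.finrank ℝ (Fin d → ℝ) := by
    simp [← hd]
  have hT_surj : Function.Surjective T :=
    (LinearMap.injective_iff_surjective_of_finrank_eq_finrank hrank).mp hT_inj
  obtain ⟨C, hCpos, hCx⟩ : ∃ C : ℝ, 0 < C ∧ ∀ x : V, ‖x‖ ≤ C * ‖T x‖ := by
    let E : V ≃ₗ[ℝ] (Fin d → ℝ) := LinearEquiv.ofBijective T ⟨hT_inj, hT_surj⟩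
    let S : V ≃L[ℝ] (Fin d → ℝ) := E.toContinuousLinearEquiv
    refine ⟨‖(S.symm : (Fin d → ℝ) →L[ℝ] V)‖ + 1, by positivity, fun x => ?_⟩
    have h1 : S.symm (S x) = x := S.symm_apply_apply x
    have h2 : ‖S.symm (S x)‖ ≤ ‖(S.symm : (Fin d → ℝ) →L[ℝ] V)‖ * ‖S x‖ :=
      (S.symm : (Fin d → ℝ) →L[ℝ] V).le_opNorm (S x)
    have h3 : (S x : Fin d → ℝ) = T x := rfl
    rw [h1, h3] at h2
    have h4 : ‖(S.symm : (Fin d → ℝ) →L[ℝ] V)‖ * ‖T x‖ ≤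
        (‖(S.symm : (Fin d → ℝ) →L[ℝ] V)‖ + 1) * ‖T x‖ := by
      apply mul_le_mul_of_nonneg_right _ (norm_nonneg _)
      linarith
    linarith
  -- a point where all ψ i are 1
  obtain ⟨x₀, hx₀⟩ : ∃ x₀ : V, ∀ i, ψ i x₀ = 1 := by
    obtain ⟨x₀, hx₀⟩ := hT_surj (fun _ => 1)
    exact ⟨x₀, fun i => congrFun hx₀ i⟩
  -- the radius
  set ε : ℝ := min (1 / (2 * C * d)) (1 / (‖x₀‖ + 1)) with hεdef
  have hεpos : 0 < ε := lt_min (by positivity) (by positivity)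
  have hε1 : ε * (C * d) ≤ 1 / 2 := by
    have h : ε ≤ 1 / (2 * C * d) := min_le_left _ _
    have h2 : ε * (2 * C * d) ≤ 1 := by
      rw [← le_div_iff₀ (by positivity)]
      exact h
    nlinarith
  have hε2 : ε * ‖x₀‖ < 1 := by
    have h := min_le_right (1 / (2 * C * d)) (1 / (‖x₀‖ + 1))
    rw [← hεdef] at h
    have h2 : ε * (‖x₀‖ + 1) ≤ 1 := by
      rw [← le_div_iff₀ (by positivity)]
      exact h
    nlinarith [norm_nonneg x₀]
  refine ⟨fun i => Metric.ball (ψ i) ε, fun i => Metric.ball_mem_nhds _ hεpos,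
    fun φ hφ => ?_⟩
  have hdiff : ∀ i (x : V), |φ i x - ψ i x| ≤ ε * ‖x‖ := by
    intro i x
    have h1 : ‖(φ i - ψ i) x‖ ≤ ‖φ i - ψ i‖ * ‖x‖ := (φ i - ψ i).le_opNorm x
    have h2 : ‖φ i - ψ i‖ ≤ ε := by
      have := hφ i
      rw [Metric.mem_ball, dist_eq_norm] at this
      exact this.le
    have h3 : ‖φ i - ψ i‖ * ‖x‖ ≤ ε * ‖x‖ :=
      mul_le_mul_of_nonneg_right h2 (norm_nonneg x)
    calc |φ i x - ψ i x| = ‖(φ i - ψ i) x‖ := by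
          simp [ContinuousLinearMap.sub_apply, Real.norm_eq_abs]
      _ ≤ ε * ‖x‖ := le_trans h1 h3
  -- the key positivity statement
  have key : ∀ x : V, (∀ i, 0 ≤ φ i x) → x ≠ 0 → 0 < ∑ i, ψ i x := by
    intro x hx hx0
    have hxn : 0 < ‖x‖ := norm_pos_iff.mpr hx0
    have hlow : ∀ i, -(ε * ‖x‖) ≤ ψ i x := by
      intro i
      have h1 := (abs_le.mp (hdiff i x)).2
      have h2 := hx i
      linarith
    obtain ⟨j, -, hj⟩ := Finset.exists_max_image Finset.univ (fun i => ψ i x)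
      ⟨⟨0, hdpos⟩, Finset.mem_univ _⟩
    set m : ℝ := ψ j x with hm
    have hup : ∀ i, ψ i x ≤ m := fun i => hj i (Finset.mem_univ i)
    have hTx : ‖T x‖ ≤ max m (ε * ‖x‖) := by
      rw [pi_norm_le_iff_of_nonneg (le_max_of_le_right (by positivity))]
      intro i
      have h1 : ‖T x i‖ = |ψ i x| := rfl
      rw [h1, abs_le]
      constructor
      · have := hlow i
        have h2 : ε * ‖x‖ ≤ max m (ε * ‖x‖) := le_max_right _ _
        linarith
      · exact le_trans (hup i) (le_max_left _ _)
    have hxC : ‖x‖ ≤ C * max m (ε * ‖x‖) :=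
      le_trans (hCx x) (mul_le_mul_of_nonneg_left hTx hCpos.le)
    have hmε : ε * ‖x‖ < m := by
      by_contra hcon
      push_neg at hcon
      have hmax : max m (ε * ‖x‖) = ε * ‖x‖ := max_eq_right hcon
      rw [hmax] at hxC
      have hεC : ε * C ≤ 1 / 2 := by
        nlinarith [mul_nonneg (mul_nonneg hεpos.le hCpos.le)
          (by linarith : (0:ℝ) ≤ (d:ℝ) - 1)]
      nlinarith [mul_le_mul_of_nonneg_right hεC hxn.le]
    have hm0 : 0 < m := lt_of_le_of_lt (by positivity) hmε
    have hxCm : ‖x‖ ≤ C * m := by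
      rw [max_eq_left hmε.le] at hxC
      exact hxC
    have hlow2 : ∀ i, -(ε * (C * m)) ≤ ψ i x := by
      intro i
      have h1 := hlow i
      have h2 : ε * ‖x‖ ≤ ε * (C * m) :=
        mul_le_mul_of_nonneg_left hxCm hεpos.le
      linarith
    have hsplit : ∑ i, ψ i x = m + ∑ i ∈ Finset.univ.erase j, ψ i x := by
      rw [hm]
      exact (Finset.add_sum_erase Finset.univ (fun i => ψ i x)
        (Finset.mem_univ j)).symm
    have herase : -((d : ℝ) * (ε * (C * m))) ≤ ∑ i ∈ Finset.univ.erase j, ψ i x := by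
      have h1 : ((Finset.univ.erase j).card : ℝ) * (-(ε * (C * m))) ≤
          ∑ i ∈ Finset.univ.erase j, ψ i x := by
        have h := Finset.card_nsmul_le_sum (Finset.univ.erase j)
          (fun i => ψ i x) (-(ε * (C * m))) (fun i _ => hlow2 i)
        rwa [nsmul_eq_mul] at h
      have h2 : ((Finset.univ.erase j).card : ℝ) ≤ (d : ℝ) := by
        have : (Finset.univ.erase j).card ≤ d := by
          calc (Finset.univ.erase j).card ≤ Finset.univ.card :=
                Finset.card_erase_le.trans (le_refl _)
            _ = d := by simp
        exact_mod_cast this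
      have h3 : (0 : ℝ) ≤ ε * (C * m) := by positivity
      nlinarith
    have hεCdm : (d : ℝ) * (ε * (C * m)) ≤ m / 2 := by
      have : ε * (C * d) * m ≤ (1 / 2) * m :=
        mul_le_mul_of_nonneg_right hε1 hm0.le
      nlinarith
    rw [hsplit]
    linarith
  -- now establish all the conclusions
  refine ⟨?_, ?_, ?_, ?_, ?_, ?_⟩
  · -- convex
    intro x hx y hy a b ha hb _
    intro i
    simp only [Set.mem_setOf_eq] at hx hy ⊢
    rw [map_add, map_smul, map_smul, smul_eq_mul, smul_eq_mul]
    exact add_nonneg (mul_nonneg ha (hx i)) (mul_nonneg hb (hy i))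
  · -- scaling
    intro c hc x hx i
    simp only [Set.mem_setOf_eq] at hx ⊢
    rw [map_smul, smul_eq_mul]
    exact mul_nonneg hc (hx i)
  · -- pointed
    ext x
    simp only [Set.mem_inter_iff, Set.mem_setOf_eq, Set.mem_neg,
      Set.mem_singleton_iff]
    constructor
    · rintro ⟨h1, h2⟩
      by_contra hx0
      have hp1 := key x h1 hx0
      have hp2 := key (-x) (fun i => by simpa using h2 i) (neg_ne_zero.mpr hx0)
      have : ∑ i, ψ i (-x) = -∑ i, ψ i x := by simp
      rw [this] at hp2
      linarith
    · rintro rfl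
      constructor
      · intro i; simp
      · intro i; simp
  · -- closed
    have h : {x : V | ∀ i, 0 ≤ φ i x} = ⋂ i, (φ i) ⁻¹' Set.Ici 0 := by
      ext x; simp [Set.mem_iInter]
    rw [h]
    exact isClosed_iInter fun i => (isClosed_Ici).preimage (φ i).continuous
  · -- solid
    have hOopen : IsOpen (⋂ i, (φ i) ⁻¹' Set.Ioi 0) :=
      isOpen_iInter_of_finite fun i => (isOpen_Ioi).preimage (φ i).continuous
    have hOsub : (⋂ i, (φ i) ⁻¹' Set.Ioi 0) ⊆ {x : V | ∀ i, 0 ≤ φ i x} := by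
      intro y hy i
      have := Set.mem_iInter.mp hy i
      exact le_of_lt this
    have hx₀O : x₀ ∈ ⋂ i, (φ i) ⁻¹' Set.Ioi 0 := by
      rw [Set.mem_iInter]
      intro i
      have h1 := (abs_le.mp (hdiff i x₀)).1
      have h2 := hx₀ i
      simp only [Set.mem_preimage, Set.mem_Ioi]
      nlinarith
    exact ⟨x₀, interior_maximal hOsub hOopen hx₀O⟩
  · -- strict positivity
    intro x hx hx0
    have h := key x hx hx0
    rw [ContinuousLinearMap.smul_apply, ContinuousLinearMap.sum_apply]
    simp only [smul_eq_mul]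
    positivity
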